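/- If n and m are distinct positive integers such that n/m is not an integer power (positive or negative) of any prime p, then the cyclotomic polynomials Φ_n and Φ_m generate the unit ideal in ℤ[v]. -/

import Mathlib

open Polynomial

/-- If `n ≠ m` are positive integers that are not "adjacent", i.e. `n/m` is not an
integer power (positive or negative) of any prime, then `Φ_n` and `Φ_m` generate
the unit ideal in `ℤ[v]`. -/
theorem cyclotomic_coprime_of_not_adjacent (n m : ℕ) (hn : 0 < n) (hm : 0 < m)
    (hnm : n ≠ m)
    (h : ∀ p : ℕ, p.Prime → ∀ e : ℤ, (n : ℚ) / (m : ℚ) ≠ (p : ℚ) ^ e) :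
    Ideal.span {cyclotomic n ℤ, cyclotomic m ℤ} = (⊤ : Ideal (Polynomial ℤ)) := by
  by_contra hspan
  obtain ⟨M, hMmax, hsub⟩ := Ideal.exists_le_maximal _ hspan
  haveI := hMmax
  letI K := Polynomial ℤ ⧸ M
  letI : Field K := Ideal.Quotient.field M
  let φ : Polynomial ℤ →+* K := Ideal.Quotient.mk M
  let μ : K := φ X
  have key : ∀ k : ℕ, cyclotomic k ℤ ∈ M → (cyclotomic k K).IsRoot μ := by
    intro k hk
    have h0 : φ (cyclotomic k ℤ) = 0 := Ideal.Quotient.eq_zero_iff_mem.2 hk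
    have h1 : (cyclotomic k ℤ).eval₂ (φ.comp C) μ = 0 := by
      rw [← hom_eval₂, eval₂_C_X, h0]
    have h2 : (Int.castRingHom K) = φ.comp C := Subsingleton.elim _ _
    have h3 : cyclotomic k K = (cyclotomic k ℤ).map (Int.castRingHom K) :=
      (map_cyclotomic k (Int.castRingHom K)).symm
    rw [IsRoot.def, h3, eval_map, h2, h1]
  have hrn : (cyclotomic n K).IsRoot μ :=
    key n (hsub (Ideal.subset_span (by simp)))
  have hrm : (cyclotomic m K).IsRoot μ :=
    key m (hsub (Ideal.subset_span (by simp)))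
  obtain ⟨p, hchar⟩ := CharP.exists K
  rcases CharP.char_is_prime_or_zero K p with hp | rfl
  · -- characteristic p
    haveI : Fact p.Prime := ⟨hp⟩
    have hpn : ¬ p ∣ ordCompl[p] n := Nat.not_dvd_ordCompl hp hn.ne'
    have hpm : ¬ p ∣ ordCompl[p] m := Nat.not_dvd_ordCompl hp hm.ne'
    haveI : NeZero ((ordCompl[p] n : ℕ) : K) := NeZero.of_not_dvd K hpn
    haveI : NeZero ((ordCompl[p] m : ℕ) : K) := NeZero.of_not_dvd K hpm
    have hn' : IsPrimitiveRoot μ (ordCompl[p] n) := by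
      rw [← isRoot_cyclotomic_prime_pow_mul_iff_of_charP (k := n.factorization p) (p := p)]
      rwa [Nat.ordProj_mul_ordCompl_eq_self n p]
    have hm' : IsPrimitiveRoot μ (ordCompl[p] m) := by
      rw [← isRoot_cyclotomic_prime_pow_mul_iff_of_charP (k := m.factorization p) (p := p)]
      rwa [Nat.ordProj_mul_ordCompl_eq_self m p]
    have hd : ordCompl[p] n = ordCompl[p] m := hn'.unique hm'
    refine h p hp ((n.factorization p : ℤ) - (m.factorization p : ℤ)) ?_
    have hp0 : (p : ℚ) ≠ 0 := by exact_mod_cast hp.ne_zero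
    have hd0 : ((ordCompl[p] m : ℕ) : ℚ) ≠ 0 := by
      exact_mod_cast (Nat.ordCompl_pos p hm.ne').ne'
    have heqn : (n : ℚ) = (p : ℚ) ^ (n.factorization p) * (ordCompl[p] m : ℕ) := by
      rw [← hd]
      exact_mod_cast (Nat.ordProj_mul_ordCompl_eq_self n p).symm
    have heqm : (m : ℚ) = (p : ℚ) ^ (m.factorization p) * (ordCompl[p] m : ℕ) := by
      exact_mod_cast (Nat.ordProj_mul_ordCompl_eq_self m p).symm
    rw [heqn, heqm, zpow_sub₀ hp0, zpow_natCast, zpow_natCast]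
    field_simp
  · -- characteristic zero
    haveI : CharZero K := CharP.charP_to_charZero K
    haveI : NeZero ((n : ℕ) : K) := ⟨by exact_mod_cast hn.ne'⟩
    haveI : NeZero ((m : ℕ) : K) := ⟨by exact_mod_cast hm.ne'⟩
    rw [isRoot_cyclotomic_iff] at hrn hrm
    exact hnm (hrn.unique hrm)
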